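/- Let G = (V,E) be a graph, V' ⊆ V, and let G*(V') be defined as the graph on V' with edges {u,v} iff there is a path in G between u and v whose intermediate vertices lie in V − V'. If T ⊆ V' is a cutset in G*(V') (i.e., removing T disconnects G*(V')), then T is also a cutset in G. -/

import Mathlib

/-- The graph `G*(S)` on vertex subset `S`: distinct `u, v ∈ S` are adjacent iff
there is a path (walk) between `u` and `v` in `G` all of whose intermediate
vertices lie outside `S`. Vertices outside `S` are isolated. -/
def GStar {V : Type} (G : SimpleGraph V) (S : Set V) : SimpleGraph V where
  Adj u v := u ≠ v ∧ u ∈ S ∧ v ∈ S ∧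
    ∃ p : G.Walk u v, ∀ x ∈ p.support, x ≠ u → x ≠ v → x ∉ S
  symm := ⟨by
    rintro u v ⟨hne, hu, hv, p, hp⟩
    refine ⟨hne.symm, hv, hu, p.reverse, ?_⟩
    intro x hx hxv hxu
    exact hp x (by simpa [SimpleGraph.Walk.support_reverse] using hx) hxu hxv⟩
  loopless := ⟨fun u h => h.1 rfl⟩

/-- `a` and `b` are joined by a walk in `G` whose vertices all lie in `A`
(i.e. they are in the same component of the induced subgraph on `A`). -/
def ReachIn {V : Type} (G : SimpleGraph V) (A : Set V) (a b : V) : Prop :=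
  ∃ p : G.Walk a b, ∀ x ∈ p.support, x ∈ A

theorem gstar_aux {V : Type} (G : SimpleGraph V) (V' T : Set V) (hT : T ⊆ V') :
    ∀ {a b : V} (p : G.Walk a b), b ∈ V' → (∀ x ∈ p.support, x ∉ T) →
    ∀ a₀, a₀ ∈ V' → a₀ ∉ T →
    ∀ (w : G.Walk a₀ a), (∀ x ∈ w.support, x ≠ a₀ → x ∉ V') →
    ReachIn (GStar G V') Tᶜ a₀ b := by
  intro a b p
  induction p with
  | nil =>
    rename_i u
    intro hb _ a₀ ha₀ ha₀T w hw
    have : u = a₀ := by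
      by_contra hne
      exact hw u (SimpleGraph.Walk.end_mem_support w) hne hb
    subst this
    exact ⟨SimpleGraph.Walk.nil, by intro x hx; simp at hx; subst hx; exact ha₀T⟩
  | cons h q ih =>
    rename_i u v c
    intro hb hsup a₀ ha₀ ha₀T w hw
    have hsup' : ∀ x ∈ q.support, x ∉ T := fun x hx =>
      hsup x (by simp [SimpleGraph.Walk.support_cons, hx])
    by_cases hv : v ∈ V'
    · have hvT : v ∉ T := hsup' v q.start_mem_support
      have base : ReachIn (GStar G V') Tᶜ v c :=
        ih hb hsup' v hv hvT SimpleGraph.Walk.nil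
          (by intro x hx hxne; simp at hx; exact absurd hx hxne)
      by_cases heq : a₀ = v
      · subst heq; exact base
      · have hadj : (GStar G V').Adj a₀ v := by
          refine ⟨heq, ha₀, hv, w.concat h, ?_⟩
          intro x hx hx₀ hxv
          rw [SimpleGraph.Walk.support_concat, List.mem_append] at hx
          rcases hx with hx | hx
          · exact hw x hx hx₀
          · simp at hx; exact absurd hx hxv
        obtain ⟨pw, hpw⟩ := base
        refine ⟨SimpleGraph.Walk.cons hadj pw, ?_⟩
        intro x hx
        rw [SimpleGraph.Walk.support_cons, List.mem_cons] at hx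
        rcases hx with rfl | hx
        · exact ha₀T
        · exact hpw x hx
    · refine ih hb hsup' a₀ ha₀ ha₀T (w.concat h) ?_
      intro x hx hx₀
      rw [SimpleGraph.Walk.support_concat, List.mem_append] at hx
      rcases hx with hx | hx
      · exact hw x hx hx₀
      · simp at hx; subst hx; exact hv

/-- If `T ⊆ V'` is a cutset in `G*(V')` (removing `T` leaves two
vertices of `V'` not connected within the complement of `T`), then `T` is also a
cutset in `G`.  `G` is a finite connected simple graph. -/
theorem stmt_7 {V : Type} [Fintype V] (G : SimpleGraph V) (hG : G.Connected)
    (V' : Set V) (T : Set V) (hT : T ⊆ V')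
    (hcut : ∃ a b : V, a ∈ V' ∧ b ∈ V' ∧ a ∉ T ∧ b ∉ T ∧
      ¬ ReachIn (GStar G V') Tᶜ a b) :
    ∃ a b : V, a ∉ T ∧ b ∉ T ∧ ¬ ReachIn G Tᶜ a b := by
  obtain ⟨a, b, ha, hb, haT, hbT, hnr⟩ := hcut
  refine ⟨a, b, haT, hbT, fun ⟨p, hp⟩ => ?_⟩
  exact hnr (gstar_aux G V' T hT p hb (fun x hx => hp x hx) a ha haT
    SimpleGraph.Walk.nil (by intro x hx hxne; simp at hx; exact absurd hx hxne))
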